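/- Let G be a finite group, S a Sylow p-subgroup, and G_0 = S ≤ G_1 ≤ … ≤ G_n = G a tower of subgroups. Then for each i, G_{i-1} contains a Sylow p-subgroup of G_i (namely S), and an element x ∈ H^*(S; F_p) lies in the image of res^G_S if and only if, setting R_0 = H^*(S; F_p) and R_i = image of res^{G_i}_S, one has x ∈ R_n, where each R_i is the set of elements of R_{i-1} stable with respect to all (G_{i-1}, G_{i-1})-double cosets in G_i. -/

import Mathlib

variable {G : Type*} [Group G]

/-- `gKg⁻¹`. -/
def conjSub (g : G) (K : Subgroup G) : Subgroup G :=
  K.map (MulAut.conj g).toMonoidHom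

/-- `H^g ∩ H := g⁻¹Hg ⊓ H`. -/
def interSub (g : G) (H : Subgroup G) : Subgroup G :=
  conjSub g⁻¹ H ⊓ H

/-- The conjugation homomorphism `c_g : H^g ∩ H → H ∩ gHg⁻¹ ≤ H`, `h ↦ ghg⁻¹`. -/
def conjHom (g : G) (H : Subgroup G) : interSub g H →* H where
  toFun x := ⟨g * (x : G) * g⁻¹, by
    obtain ⟨hx, -⟩ := x.2
    obtain ⟨h, hh, he⟩ := hx
    have : (x : G) = g⁻¹ * h * g⁻¹⁻¹ := he.symm
    rw [this]
    simpa [mul_assoc] using hh⟩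
  map_one' := by ext; simp
  map_mul' x y := by ext; simp [mul_assoc]

lemma interSub_le (g : G) (H : Subgroup G) : interSub g H ≤ H := inf_le_right

section

variable (p : ℕ) (Hcoh : Subgroup G → ℕ → Type*)
  [∀ K n, AddCommGroup (Hcoh K n)] [∀ K n, Module (ZMod p) (Hcoh K n)]
  (Hmap : ∀ {A B : Subgroup G}, ((A : Type _) →* B) → ∀ n : ℕ,
      Hcoh B n →ₗ[ZMod p] Hcoh A n)

/-- The stability condition for `g ∈ G` on a class `x ∈ H^n(K; F_p)`:
`res^K_{K^g ∩ K}(x) = g^*(res^K_{K ∩ gKg⁻¹}(x))`. -/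
def IsStable (K : Subgroup G) (g : G) (n : ℕ) (x : Hcoh K n) : Prop :=
  Hmap (Subgroup.inclusion (interSub_le g K)) n x = Hmap (conjHom g K) n x

variable (Gs : ℕ → Subgroup G) (hS : ∀ i, Gs 0 ≤ Gs i)

/-- The sets `R_i ⊆ H^*(S; F_p)` of Holt's iterated stable elements method for a tower
`S = G_0 ≤ G_1 ≤ ⋯`: `R_0 = H^*(S; F_p)`, and `R_{i+1}` consists of those elements of
`R_i` whose representative `y ∈ H^*(G_i; F_p)` (inductively, `R_i` is the image of the
injective restriction `res^{G_i}_S`) is stable with respect to all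
`(G_i, G_i)`-double cosets in `G_{i+1}`. -/
def Rset (n : ℕ) : ℕ → Set (Hcoh (Gs 0) n)
  | 0 => Set.univ
  | (i + 1) => { x ∈ Rset n i |
      ∀ y : Hcoh (Gs i) n, Hmap (Subgroup.inclusion (hS i)) n y = x →
        ∀ g ∈ Gs (i + 1), IsStable p Hcoh @Hmap (Gs i) g n y }

/-- Holt's tower version of the Cartan–Eilenberg stable elements
theorem. Let `G` be a finite group, `S` a Sylow `p`-subgroup, and
`G_0 = S ≤ G_1 ≤ ⋯ ≤ G_N = G` a tower of subgroups. Then each `G_{i-1}` contains a Sylow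
`p`-subgroup of `G_i` (namely `S`, i.e. the relative index `[G_i : S]` is coprime to
`p`), and `x ∈ H^*(S; F_p)` lies in the image of `res^G_S` if and only if `x ∈ R_N`,
where `R_0 = H^*(S; F_p)` and each `R_i` is the set of elements of `R_{i-1}` stable with
respect to all `(G_{i-1}, G_{i-1})`-double cosets in `G_i`.

Cohomology is abstracted as a contravariant functor `Hmap`; the single-step
Cartan–Eilenberg stable elements theorem is the hypothesis `stable_elements`. -/
theorem mem_range_res_iff_mem_Rset
    [Finite G] [Fact p.Prime]
    -- contravariant functoriality:
    (Hmap_id : ∀ (A : Subgroup G) (n : ℕ), Hmap (MonoidHom.id A) n = LinearMap.id)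
    (Hmap_comp : ∀ {A B C : Subgroup G} (f : (A : Type _) →* B) (f' : (B : Type _) →* C)
      (n : ℕ), Hmap (f'.comp f) n = (Hmap f n).comp (Hmap f' n))
    -- the Cartan–Eilenberg stable elements theorem: for `K ≤ M` of index coprime to
    -- `p`, restriction identifies `H^*(M; F_p)` with the stable elements in `H^*(K; F_p)`
    (stable_elements : ∀ (K M : Subgroup G) (h : K ≤ M),
      Nat.Coprime (K.relIndex M) p → ∀ n : ℕ,
        Set.range (Hmap (Subgroup.inclusion h) n)
          = { x : Hcoh K n | ∀ g ∈ M, IsStable p Hcoh @Hmap K g n x })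
    -- injectivity of restriction to a subgroup of index coprime to `p`:
    (res_inj : ∀ (K M : Subgroup G) (h : K ≤ M), Nat.Coprime (K.relIndex M) p →
      ∀ n : ℕ, Function.Injective (Hmap (Subgroup.inclusion h) n))
    -- the tower `S = G_0 ≤ G_1 ≤ ⋯ ≤ G_N = G`, with `S` a Sylow `p`-subgroup of `G`:
    (N : ℕ) (hmono : ∀ i, Gs i ≤ Gs (i + 1)) (htop : Gs N = ⊤)
    (hSp : IsPGroup p (Gs 0)) (hScop : Nat.Coprime (Gs 0).index p) :
    (∀ i ≤ N, Nat.Coprime ((Gs 0).relIndex (Gs i)) p) ∧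
      ∀ (n : ℕ) (x : Hcoh (Gs 0) n),
        x ∈ Set.range (Hmap (Subgroup.inclusion (hS N)) n)
          ↔ x ∈ Rset p Hcoh @Hmap Gs hS n N := by
  have hcop : ∀ i, Nat.Coprime ((Gs 0).relIndex (Gs i)) p := fun i =>
    Nat.Coprime.coprime_dvd_left (Subgroup.relIndex_dvd_index_of_le (hS i)) hScop
  have key : ∀ i n (x : Hcoh (Gs 0) n),
      x ∈ Set.range (Hmap (Subgroup.inclusion (hS i)) n)
        ↔ x ∈ Rset p Hcoh @Hmap Gs hS n i := by
    intro i
    induction i with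
    | zero =>
      intro n x
      have hid : Subgroup.inclusion (hS 0) = MonoidHom.id (Gs 0) := by ext; rfl
      simp [Rset, hid, Hmap_id]
    | succ i ih =>
      intro n x
      have hcomp : Hmap (Subgroup.inclusion (hS (i+1))) n
          = (Hmap (Subgroup.inclusion (hS i)) n).comp
              (Hmap (Subgroup.inclusion (hmono i)) n) := by
        have : (Subgroup.inclusion (hmono i)).comp (Subgroup.inclusion (hS i))
            = Subgroup.inclusion (hS (i+1)) := by ext; rfl
        rw [← this, Hmap_comp]
      have hcop' : Nat.Coprime ((Gs i).relIndex (Gs (i+1))) p :=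
        Nat.Coprime.coprime_dvd_left
          ⟨(Gs 0).relIndex (Gs i), by
            rw [mul_comm, Subgroup.relIndex_mul_relIndex _ _ _ (hS i) (hmono i)]⟩
          (hcop (i+1))
      constructor
      · rintro ⟨z, rfl⟩
        refine ⟨(ih n _).1 ⟨Hmap (Subgroup.inclusion (hmono i)) n z, by rw [hcomp]; rfl⟩, ?_⟩
        intro y hy g hg
        have hyz : y = Hmap (Subgroup.inclusion (hmono i)) n z := by
          apply res_inj (Gs 0) (Gs i) (hS i) (hcop i) n
          rw [hy, hcomp]; rfl
        have hmem : y ∈ Set.range (Hmap (Subgroup.inclusion (hmono i)) n) := ⟨z, hyz.symm⟩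
        rw [stable_elements (Gs i) (Gs (i+1)) (hmono i) hcop' n] at hmem
        exact hmem g hg
      · rintro ⟨hx, hst⟩
        obtain ⟨y, hy⟩ := (ih n x).2 hx
        have hmem : y ∈ { v : Hcoh (Gs i) n |
            ∀ g ∈ Gs (i+1), IsStable p Hcoh @Hmap (Gs i) g n v } :=
          fun g hg => hst y hy g hg
        rw [← stable_elements (Gs i) (Gs (i+1)) (hmono i) hcop' n] at hmem
        obtain ⟨z, hz⟩ := hmem
        exact ⟨z, by rw [hcomp]; simp [hz, hy]⟩
  exact ⟨fun i _ => hcop i, fun n x => key N n x⟩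

end
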